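/- Let h > 0, a₂₂ ∈ ℝ, η = a₂₂/h, and suppose η = N/M where N ∈ ℤ and M is a positive integer. Let q₁ ∈ ℝ and I₂ ∈ ℝ. Suppose there exist complex numbers C^j_k, indexed by j ∈ {0,1,…,M−1} and k ∈ ℤ, not all zero, satisfying for all such j and k: C^j_k · exp( 2πi(I₂ + k·a₂₂)/h ) = C^j_k · exp( −2πi(q₁ − jη) ). Then there exists n ∈ ℤ such that I₂ = h·( n/M − q₁ ). -/

import Mathlib

open Real

theorem stmt_19 (h : ℝ) (hh : 0 < h) (a₂₂ : ℝ) (η : ℝ) (hη : η = a₂₂ / h)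
    (N : ℤ) (M : ℕ) (hM : 0 < M) (hrat : η = (N : ℝ) / (M : ℝ))
    (q₁ I₂ : ℝ) (C : Fin M → ℤ → ℂ)
    (hC0 : ∃ j k, C j k ≠ 0)
    (heq : ∀ (j : Fin M) (k : ℤ),
      C j k * Complex.exp (2 * (π : ℂ) * Complex.I * (((I₂ + (k : ℝ) * a₂₂) / h : ℝ) : ℂ))
        = C j k * Complex.exp (-(2 * (π : ℂ) * Complex.I) * ((q₁ - ((j : ℕ) : ℝ) * η : ℝ) : ℂ))) :
    ∃ n : ℤ, I₂ = h * ((n : ℝ) / (M : ℝ) - q₁) := by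
  obtain ⟨j, k, hjk⟩ := hC0
  have hexp := mul_left_cancel₀ hjk (heq j k)
  rw [Complex.exp_eq_exp_iff_exists_int] at hexp
  obtain ⟨m, hm⟩ := hexp
  have h2pi : (2 * (π : ℂ) * Complex.I) ≠ 0 := by
    simp [Real.pi_ne_zero, Complex.I_ne_zero]
  have hc : (((I₂ + (k : ℝ) * a₂₂) / h + (q₁ - ((j : ℕ) : ℝ) * η) : ℝ) : ℂ) = (m : ℂ) := by
    apply mul_left_cancel₀ h2pi
    push_cast at hm ⊢
    linear_combination hm
  have key : (I₂ + (k : ℝ) * a₂₂) / h + (q₁ - ((j : ℕ) : ℝ) * η) = (m : ℝ) := by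
    exact_mod_cast hc
  have ha : a₂₂ = η * h := by field_simp at hη; linarith
  have hM' : ((M : ℝ)) ≠ 0 := by positivity
  refine ⟨m * M + ((j : ℤ) - k) * N, ?_⟩
  subst ha
  rw [hrat] at key
  have hh' : h ≠ 0 := hh.ne'
  field_simp at key
  have key2 : I₂ * M + (k:ℝ) * N * h + q₁ * M * h - ((j:ℕ):ℝ) * N * h = m * M * h := by
    apply mul_left_cancel₀ hM'
    linear_combination (M:ℝ) * key
  rw [show ((((m * (M:ℤ) + ((j:ℕ) - k) * N) : ℤ)):ℝ) / (M:ℝ) - q₁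
      = (((m * (M:ℤ) + ((j:ℕ) - k) * N : ℤ):ℝ) - (M:ℝ) * q₁) / (M:ℝ) by field_simp,
    ← mul_div_assoc, eq_div_iff hM']
  push_cast
  linear_combination key2
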